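/- For each i ∈ ℤ_n there is a graph whose cycle matroid is M_n (an n-circuit plus a loop) which meets all connectivity constraints X[j,n] for j ≠ i: namely, the n-cycle with the loop attached at the vertex incident with e_i and e_{i+1}. -/

import Mathlib

/-- A multigraph: each edge has an unordered pair of endvertices (possibly equal,
i.e. loops are allowed). -/
structure MGraph (V E : Type*) where
  ends : E → Sym2 V

/-- An edge set `X` of a graph is connected if the subgraph consisting of `X` and its
incident vertices is connected: any two edges of `X` are linked by a chain of edges of
`X` in which consecutive edges share a vertex. -/
def EdgeConnected {V E : Type*} (G : MGraph V E) (X : Set E) : Prop :=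
  ∀ a ∈ X, ∀ b ∈ X, Relation.ReflTransGen
    (fun x y => x ∈ X ∧ y ∈ X ∧ ∃ v : V, v ∈ G.ends x ∧ v ∈ G.ends y) a b

/-- The degree of the vertex `v` in the edge set `X`: loops count twice. -/
noncomputable def degIn {V E : Type*} (G : MGraph V E) (X : Set E) (v : V) : ℕ :=
  {e ∈ X | v ∈ G.ends e ∧ ¬ (G.ends e).IsDiag}.ncard +
    2 * {e ∈ X | G.ends e = Sym2.diag v}.ncard

/-- A circuit of the cycle matroid of a graph: the edge set of a cycle, i.e. a
nonempty finite connected edge set in which every vertex has degree `0` or `2`. -/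
def GraphCircuit {V E : Type*} (G : MGraph V E) (X : Set E) : Prop :=
  X.Nonempty ∧ X.Finite ∧ EdgeConnected G X ∧ ∀ v : V, degIn G X v = 0 ∨ degIn G X v = 2

/-- The set of circuits of the cycle matroid of the graph `G`. -/
def graphCircuits {V E : Type*} (G : MGraph V E) : Set (Set E) :=
  {X | GraphCircuit G X}

/-- The ground set of the matroid `M_n`: the elements `e_i` (`i ∈ ℤ_n`) of the
`n`-circuit together with the loop `ℓ`. -/
abbrev MnElem (n : ℕ) := ZMod n ⊕ Unit

/-- The circuits of `M_n`, the direct sum of a circuit on `e_1, …, e_n` and a loop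
`ℓ`: the set of all `e_i`, and the singleton of the loop. -/
def MnCircuits (n : ℕ) : Set (Set (MnElem n)) :=
  {Set.range Sum.inl, {Sum.inr ()}}

/-- The connectivity constraint `X[i,n]`: all cycle elements except `e_i` and
`e_{i+1}`, together with the loop `ℓ`. -/
def MnConstraint (n : ℕ) (i : ZMod n) : Set (MnElem n) :=
  (Set.range Sum.inl \ {Sum.inl i, Sum.inl (i + 1)}) ∪ {Sum.inr ()}

namespace CycAux

/-- The `n`-cycle with a loop attached at vertex `i+1`. -/
def cycG (n : ℕ) (i : ZMod n) : MGraph (ZMod n) (MnElem n) :=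
  ⟨Sum.elim (fun k => s(k, k + 1)) (fun _ => Sym2.diag (i + 1))⟩

variable {n : ℕ}

lemma self_ne_add_one (hn : 3 ≤ n) (k : ZMod n) : k ≠ k + 1 := by
  haveI : Fact (1 < n) := ⟨by omega⟩
  intro h
  have : (1 : ZMod n) = 0 := by linear_combination -h
  exact one_ne_zero this

lemma degA (hn : 3 ≤ n) (i : ZMod n) (X : Set (MnElem n)) (v : ZMod n) :
    {e ∈ X | v ∈ (cycG n i).ends e ∧ ¬ ((cycG n i).ends e).IsDiag} =
      X ∩ {Sum.inl (v - 1), Sum.inl v} := by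
  ext e
  cases e with
  | inl k =>
    simp only [cycG, Set.mem_setOf_eq, Sum.elim_inl, Sym2.mem_iff, Sym2.isDiag_iff_proj_eq,
      Set.mem_inter_iff, Set.mem_insert_iff, Set.mem_singleton_iff, Sum.inl.injEq]
    constructor
    · rintro ⟨hX, hv | hv, -⟩
      · exact ⟨hX, Or.inr hv.symm⟩
      · exact ⟨hX, Or.inl (by rw [hv]; ring)⟩
    · rintro ⟨hX, hk | hk⟩
      · exact ⟨hX, Or.inr (by rw [hk]; ring), self_ne_add_one hn k⟩
      · exact ⟨hX, Or.inl hk.symm, self_ne_add_one hn k⟩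
  | inr u =>
    simp [cycG, Sym2.isDiag_iff_proj_eq]

lemma degB (hn : 3 ≤ n) (i : ZMod n) (X : Set (MnElem n)) (v : ZMod n) :
    {e ∈ X | (cycG n i).ends e = Sym2.diag v} =
      if v = i + 1 then X ∩ {Sum.inr ()} else ∅ := by
  ext e
  cases e with
  | inl k =>
    simp only [cycG, Set.mem_setOf_eq, Sum.elim_inl, Sym2.diag]
    have : ¬ s(k, k + 1) = s(v, v) := by
      rw [Sym2.eq_iff]
      rintro (⟨h1, h2⟩ | ⟨h1, h2⟩) <;>
        exact self_ne_add_one hn v (by rw [h1] at h2; exact h2.symm)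
    split <;> simp [this]
  | inr u =>
    have hd : Sym2.diag (i + 1) = Sym2.diag v ↔ i + 1 = v :=
      ⟨fun h => Sym2.diag_injective h, fun h => by rw [h]⟩
    simp only [cycG, Set.mem_setOf_eq, Sum.elim_inr, hd]
    by_cases h : v = i + 1
    · subst h; simp
    · rw [if_neg h]
      simp only [Set.mem_empty_iff_false, iff_false, not_and]
      exact fun _ hx => h hx.symm

lemma degIn_eq (hn : 3 ≤ n) (i : ZMod n) (X : Set (MnElem n)) (v : ZMod n) :
    degIn (cycG n i) X v = (X ∩ {Sum.inl (v - 1), Sum.inl v}).ncard +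
      2 * (if v = i + 1 then (X ∩ {Sum.inr ()}).ncard else 0) := by
  rw [degIn, degA hn, degB hn]
  split <;> simp

end CycAux
namespace CycAux
variable {n : ℕ}

/-- The step relation used in `EdgeConnected`. -/
def Rel (n : ℕ) (i : ZMod n) (X : Set (MnElem n)) (x y : MnElem n) : Prop :=
  x ∈ X ∧ y ∈ X ∧ ∃ v : ZMod n, v ∈ (cycG n i).ends x ∧ v ∈ (cycG n i).ends y

lemma rel_symm (i : ZMod n) (X : Set (MnElem n)) : Symmetric (Rel n i X) := by
  rintro x y ⟨hx, hy, v, hvx, hvy⟩; exact ⟨hy, hx, v, hvy, hvx⟩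

lemma edgeConnected_iff (i : ZMod n) (X : Set (MnElem n)) :
    EdgeConnected (cycG n i) X ↔
      ∀ a ∈ X, ∀ b ∈ X, Relation.ReflTransGen (Rel n i X) a b := Iff.rfl

lemma natCast_val_cast [NeZero n] (x : ZMod n) : ((x.val : ℕ) : ZMod n) = x :=
  ZMod.natCast_rightInverse x

lemma natCast_ne_natCast (hn : 0 < n) {a b : ℕ} (ha : a < n) (hb : b < n) (h : a ≠ b) :
    (a : ZMod n) ≠ (b : ZMod n) := by
  intro hc
  exact h (by rw [← ZMod.val_cast_of_lt ha, ← ZMod.val_cast_of_lt hb, hc])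

lemma chain (hn : 3 ≤ n) (i : ZMod n) (X : Set (MnElem n)) (a : ZMod n) :
    ∀ m : ℕ, (∀ t : ℕ, t ≤ m → Sum.inl (a + t) ∈ X) →
      Relation.ReflTransGen (Rel n i X) (Sum.inl a) (Sum.inl (a + m)) := by
  intro m
  induction m with
  | zero => intro _; simp only [Nat.cast_zero, add_zero]; exact .refl
  | succ m ih =>
    intro h
    refine (ih fun t ht => h t (by omega)).tail ?_
    refine ⟨h m (by omega), h (m + 1) le_rfl, a + m + 1, ?_, ?_⟩
    · simp [cycG]
    · push_cast
      simp [cycG, ← add_assoc]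

lemma mem_constraint_inl {j k : ZMod n} :
    Sum.inl k ∈ MnConstraint n j ↔ k ≠ j ∧ k ≠ j + 1 := by
  simp [MnConstraint, not_or]

lemma mem_constraint_inr {j : ZMod n} : Sum.inr () ∈ MnConstraint n j := by
  simp [MnConstraint]

end CycAux
namespace CycAux
variable {n : ℕ}

lemma cast_sub_eq (hn : 3 ≤ n) {a : ℕ} (ha : a ≤ n) : ((n - a : ℕ) : ZMod n) = -(a : ZMod n) := by
  haveI : NeZero n := ⟨by omega⟩
  have : ((n - a : ℕ) : ZMod n) + (a : ZMod n) = ((n : ℕ) : ZMod n) := by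
    rw [← Nat.cast_add]; congr 1; omega
  rw [ZMod.natCast_self] at this
  linear_combination this

lemma keyinl (hn : 3 ≤ n) (i j : ZMod n) {k : ZMod n} (hk1 : k ≠ j) (hk2 : k ≠ j + 1) :
    Relation.ReflTransGen (Rel n i (MnConstraint n j)) (Sum.inl (j + 2)) (Sum.inl k) := by
  haveI : NeZero n := ⟨by omega⟩
  set m : ℕ := (k - (j + 2)).val with hm
  have hmval : ((m : ℕ) : ZMod n) = k - (j + 2) := natCast_val_cast _
  have hmlt : m < n := ZMod.val_lt _
  have hm2 : m ≠ n - 2 := by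
    intro h
    apply hk1
    have : ((m : ℕ) : ZMod n) = -(2 : ZMod n) := by
      rw [h]; rw [show ((n - 2 : ℕ) : ZMod n) = -((2 : ℕ) : ZMod n) from cast_sub_eq hn (by omega)]
      push_cast; ring
    rw [this] at hmval
    linear_combination -hmval
  have hm1 : m ≠ n - 1 := by
    intro h
    apply hk2
    have : ((m : ℕ) : ZMod n) = -(1 : ZMod n) := by
      rw [h]; rw [show ((n - 1 : ℕ) : ZMod n) = -((1 : ℕ) : ZMod n) from cast_sub_eq hn (by omega)]
      push_cast; ring
    rw [this] at hmval
    linear_combination -hmval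
  have hmle : m ≤ n - 3 := by omega
  have hmem : ∀ t : ℕ, t ≤ m → Sum.inl ((j + 2) + t) ∈ MnConstraint n j := by
    intro t ht
    rw [mem_constraint_inl]
    constructor
    · intro h
      have h2 : ((2 + t : ℕ) : ZMod n) = ((0 : ℕ) : ZMod n) := by
        push_cast; linear_combination h
      exact natCast_ne_natCast (by omega) (by omega) (by omega) (by omega) h2
    · intro h
      have h2 : ((2 + t : ℕ) : ZMod n) = ((1 : ℕ) : ZMod n) := by
        push_cast; linear_combination h
      exact natCast_ne_natCast (by omega) (by omega) (by omega) (by omega) h2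
  have := chain hn i (MnConstraint n j) (j + 2) m hmem
  rwa [hmval, show j + 2 + (k - (j + 2)) = k by ring] at this

lemma constraint_conn (hn : 3 ≤ n) (i j : ZMod n) (hij : j ≠ i) :
    EdgeConnected (cycG n i) (MnConstraint n j) := by
  haveI : NeZero n := ⟨by omega⟩
  have h20 : (2 : ZMod n) ≠ 0 := by
    have := natCast_ne_natCast (n := n) (by omega) (a := 2) (b := 0) (by omega) (by omega) (by omega)
    simpa using this
  have h10 : (1 : ZMod n) ≠ 0 := by
    have := natCast_ne_natCast (n := n) (by omega) (a := 1) (b := 0) (by omega) (by omega) (by omega)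
    simpa using this
  have key : ∀ b ∈ MnConstraint n j,
      Relation.ReflTransGen (Rel n i (MnConstraint n j)) (Sum.inl (j + 2)) b := by
    rintro (k | u) hb
    · rw [mem_constraint_inl] at hb
      exact keyinl hn i j hb.1 hb.2
    · -- connect to the loop through e_i or e_{i+1}
      cases u
      by_cases hc : i = j + 1
      · have h1 : Sum.inl (i + 1) ∈ MnConstraint n j := by
          rw [mem_constraint_inl]
          constructor
          · intro h; apply h20; subst hc; linear_combination h
          · intro h; apply h10; linear_combination h - hc
        refine (keyinl hn i j (mem_constraint_inl.mp h1).1 (mem_constraint_inl.mp h1).2).tail ?_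
        refine ⟨h1, mem_constraint_inr, i + 1, ?_, ?_⟩
        · simp [cycG]
        · simp [cycG, Sym2.diag]
      · have h1 : Sum.inl i ∈ MnConstraint n j := by
          rw [mem_constraint_inl]
          exact ⟨fun h => hij h.symm, hc⟩
        refine (keyinl hn i j (mem_constraint_inl.mp h1).1 (mem_constraint_inl.mp h1).2).tail ?_
        refine ⟨h1, mem_constraint_inr, i + 1, ?_, ?_⟩
        · simp [cycG]
        · simp [cycG, Sym2.diag]
  intro a ha b hb
  have hs : ∀ x y, Relation.ReflTransGen (Rel n i (MnConstraint n j)) x y →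
      Relation.ReflTransGen (Rel n i (MnConstraint n j)) y x := fun x y h => by
    induction h with
    | refl => exact .refl
    | tail _ hr ih => exact Relation.ReflTransGen.head (rel_symm i _ hr) ih
  exact (hs _ _ (key a ha)).trans (key b hb)

end CycAux
namespace CycAux
variable {n : ℕ}

lemma range_circuit (hn : 3 ≤ n) (i : ZMod n) :
    GraphCircuit (cycG n i) (Set.range Sum.inl) := by
  haveI : NeZero n := ⟨by omega⟩
  refine ⟨⟨Sum.inl 0, ⟨0, rfl⟩⟩, Set.finite_range _, ?_, ?_⟩
  · -- connectivity
    rintro a ⟨ka, rfl⟩ b ⟨kb, rfl⟩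
    have := chain hn i (Set.range Sum.inl) ka (kb - ka).val (fun t _ => ⟨_, rfl⟩)
    rwa [natCast_val_cast, add_sub_cancel] at this
  · intro v
    right
    rw [degIn_eq hn]
    have h1 : Set.range (Sum.inl : ZMod n → MnElem n) ∩ {Sum.inl (v - 1), Sum.inl v} =
        {Sum.inl (v - 1), Sum.inl v} := by
      apply Set.inter_eq_self_of_subset_right
      rintro x (rfl | rfl) <;> exact ⟨_, rfl⟩
    have h2 : Set.range (Sum.inl : ZMod n → MnElem n) ∩ {Sum.inr ()} = ∅ := by
      apply Set.eq_empty_iff_forall_notMem.mpr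
      rintro x ⟨⟨k, rfl⟩, hx⟩
      simp at hx
    have hne : (Sum.inl (v - 1) : MnElem n) ≠ Sum.inl v := by
      intro h
      exact self_ne_add_one hn (v - 1) (by rw [Sum.inl.injEq] at h; linear_combination h)
    rw [h1, h2, Set.ncard_pair hne]
    split <;> simp

lemma loop_circuit (hn : 3 ≤ n) (i : ZMod n) :
    GraphCircuit (cycG n i) {Sum.inr ()} := by
  refine ⟨⟨Sum.inr (), rfl⟩, Set.finite_singleton _, ?_, ?_⟩
  · rintro a (rfl : a = _) b (rfl : b = _); exact .refl
  · intro v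
    rw [degIn_eq hn]
    have h1 : ({Sum.inr ()} : Set (MnElem n)) ∩ {Sum.inl (v - 1), Sum.inl v} = ∅ := by
      ext x; simp
    rw [h1]
    by_cases h : v = i + 1
    · right; rw [if_pos h]; simp
    · left; rw [if_neg h]; simp

lemma circuit_sub (hn : 3 ≤ n) (i : ZMod n) {X : Set (MnElem n)}
    (hX : GraphCircuit (cycG n i) X) : X ∈ MnCircuits n := by
  haveI : NeZero n := ⟨by omega⟩
  obtain ⟨⟨e0, he0⟩, hfin, hconn, hdeg⟩ := hX
  by_cases hl : Sum.inr () ∈ X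
  · -- X is the loop
    right
    have hdi : degIn (cycG n i) X (i + 1) =
        (X ∩ {Sum.inl i, Sum.inl (i + 1)}).ncard + 2 * (X ∩ {Sum.inr ()}).ncard := by
      rw [degIn_eq hn, if_pos rfl, add_sub_cancel_right]
    have hXr : X ∩ {Sum.inr ()} = {Sum.inr ()} := by
      apply Set.inter_eq_self_of_subset_right
      rintro x rfl; exact hl
    rw [hXr, Set.ncard_singleton] at hdi
    have hcard0 : (X ∩ {Sum.inl i, Sum.inl (i + 1)}).ncard = 0 := by
      rcases hdeg (i + 1) with h | h <;> omega
    have hempty : X ∩ {Sum.inl i, Sum.inl (i + 1)} = ∅ :=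
      (Set.ncard_eq_zero (hfin.inter_of_left _)).mp hcard0
    have hni : Sum.inl i ∉ X := fun h =>
      (Set.eq_empty_iff_forall_notMem.mp hempty _ ⟨h, Or.inl rfl⟩)
    have hni1 : Sum.inl (i + 1) ∉ X := fun h =>
      (Set.eq_empty_iff_forall_notMem.mp hempty _ ⟨h, Or.inr rfl⟩)
    have honly : ∀ b : MnElem n,
        Relation.ReflTransGen (Rel n i X) (Sum.inr ()) b → b = Sum.inr () := by
      intro b hb
      induction hb with
      | refl => rfl
      | @tail b c hcs hR ih =>
        subst ih
        obtain ⟨-, hbX, v, hv1, hv2⟩ := hR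
        have hv : v = i + 1 := by
          simpa [cycG, Sym2.diag] using hv1
        subst hv
        cases c with
        | inr u => rfl
        | inl k =>
          exfalso
          simp only [cycG, Sum.elim_inl, Sym2.mem_iff] at hv2
          rcases hv2 with h | h
          · exact hni1 (h ▸ hbX)
          · have hki : k = i := by linear_combination -h
            exact hni (hki ▸ hbX)
    ext b
    constructor
    · intro hb; exact honly b (hconn _ hl _ hb)
    · rintro rfl; exact hl
  · -- X is the full cycle
    left
    have hsub : X ⊆ Set.range Sum.inl := by
      rintro (k | u) hk
      · exact ⟨k, rfl⟩
      · cases u; exact absurd hk hl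
    obtain ⟨k0, rfl⟩ := hsub he0
    have claim : ∀ m : ℕ, Sum.inl (k0 + (m : ℕ)) ∈ X := by
      intro m
      induction m with
      | zero => simpa using he0
      | succ m ih =>
        set v : ZMod n := k0 + m + 1 with hv
        have hXr : X ∩ {Sum.inr ()} = ∅ := by
          ext x; simp only [Set.mem_inter_iff, Set.mem_singleton_iff, Set.mem_empty_iff_false,
            iff_false, not_and]
          rintro hx rfl; exact hl hx
        have hdi : degIn (cycG n i) X v =
            (X ∩ {Sum.inl (k0 + m), Sum.inl (k0 + m + 1)}).ncard := by
          rw [degIn_eq hn, hv, add_sub_cancel_right, hXr]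
          split <;> simp
        have hSsub : X ∩ {Sum.inl (k0 + m), Sum.inl (k0 + m + 1)} ⊆
            {Sum.inl (k0 + m), Sum.inl (k0 + m + 1)} := Set.inter_subset_right
        have hmem : Sum.inl (k0 + (m : ℕ)) ∈ X ∩ {Sum.inl (k0 + m), Sum.inl (k0 + m + 1)} :=
          ⟨ih, Or.inl rfl⟩
        have hne0 : (X ∩ {Sum.inl (k0 + m), Sum.inl (k0 + m + 1)}).ncard ≠ 0 := by
          intro h0
          rw [Set.ncard_eq_zero (((Set.finite_singleton _).insert _).subset hSsub)] at h0
          exact Set.eq_empty_iff_forall_notMem.mp h0 _ hmem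
        have hdeg2 : (X ∩ {Sum.inl (k0 + m), Sum.inl (k0 + m + 1)}).ncard = 2 := by
          rcases hdeg v with h | h <;> omega
        have hSeq : X ∩ {Sum.inl (k0 + m), Sum.inl (k0 + m + 1)} =
            {Sum.inl (k0 + m), Sum.inl (k0 + m + 1)} := by
          refine Set.eq_of_subset_of_ncard_le hSsub ?_ ((Set.finite_singleton _).insert _)
          rw [hdeg2]
          exact Set.ncard_insert_le _ _ |>.trans (by simp)
        have : Sum.inl (k0 + m + 1) ∈ X ∩ {Sum.inl (k0 + m), Sum.inl (k0 + m + 1)} := by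
          rw [hSeq]; exact Or.inr rfl
        have := this.1
        push_cast
        rwa [← add_assoc]
    ext b
    constructor
    · intro hb; exact hsub hb
    · rintro ⟨k, rfl⟩
      have := claim ((k - k0).val)
      rwa [natCast_val_cast, add_sub_cancel] at this

lemma circuits_eq (hn : 3 ≤ n) (i : ZMod n) :
    graphCircuits (cycG n i) = MnCircuits n := by
  ext X
  constructor
  · exact fun h => circuit_sub hn i h
  · rintro (rfl | rfl)
    · exact range_circuit hn i
    · exact loop_circuit hn i

end CycAux
/-- For each `i ∈ ℤ_n` there is a graph whose cycle matroid is `M_n` meeting all the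
connectivity constraints `X[j,n]` for `j ≠ i` (namely the `n`-cycle with the loop
attached at the vertex incident with `e_i` and `e_{i+1}`). -/
theorem graph_meets_all_but_one_constraint (n : ℕ) (hn : 3 ≤ n) (i : ZMod n) :
    ∃ (V : Type) (G : MGraph V (MnElem n)),
      graphCircuits G = MnCircuits n ∧
        ∀ j : ZMod n, j ≠ i → EdgeConnected G (MnConstraint n j) := by
  exact ⟨ZMod n, CycAux.cycG n i, CycAux.circuits_eq hn i,
    fun j hj => CycAux.constraint_conn hn i j hj⟩
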